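/- arXiv:math/0202272 — 3 statements merged into one kernel-verified Lean document; each statement's English description precedes it below -/
import Mathlib

section
/- For x ∈ ℂ with x^N ≠ 1 and x not an N-th root of unity, the function f(x, x/ω | ω) := ∑_{l=0}^{N-1} ω^l · ω(x|l)/ω(x/ω|l), where ω(y|l) = ∏_{j=1}^l 1/(1-yω^j), equals N x^{N-1} (1-x)/(1-x^N). -/
open Complex

/-- For `ω = exp(2πi/N)` and `x` with `x^N ≠ 1`,
`f(x, x/ω | ω) = ∑_{l=0}^{N-1} ω^l · ω(x|l)/ω(x/ω|l) = N x^{N-1}(1-x)/(1-x^N)`,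
where `ω(y|l) = ∏_{j=1}^l (1-yω^j)⁻¹`. -/
theorem stmt7 (N : ℕ) (hN : 3 ≤ N) (hodd : Odd N) (x : ℂ) (hx : x ^ N ≠ 1) :
    (∑ l ∈ Finset.range N,
        Complex.exp (2 * Real.pi * Complex.I / N) ^ l *
          ((∏ j ∈ Finset.Icc 1 l,
              (1 - (x / Complex.exp (2 * Real.pi * Complex.I / N)) *
                Complex.exp (2 * Real.pi * Complex.I / N) ^ j)) /
            (∏ j ∈ Finset.Icc 1 l,
              (1 - x * Complex.exp (2 * Real.pi * Complex.I / N) ^ j)))) =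
      (N : ℂ) * x ^ (N - 1) * (1 - x) / (1 - x ^ N) := by
  have hN0 : N ≠ 0 := by omega
  set ω := Complex.exp (2 * Real.pi * Complex.I / N) with hωdef
  have hprim : IsPrimitiveRoot ω N := Complex.isPrimitiveRoot_exp N hN0
  have hωN : ω ^ N = 1 := hprim.pow_eq_one
  have hω0 : ω ≠ 0 := Complex.exp_ne_zero _
  -- each 1 - x ω^l ≠ 0
  have hne : ∀ l : ℕ, 1 - x * ω ^ l ≠ 0 := by
    intro l h
    apply hx
    have h1 : x * ω ^ l = 1 := by linear_combination -h
    have : (x * ω ^ l) ^ N = 1 := by rw [h1]; norm_num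
    rw [mul_pow, ← pow_mul, mul_comm l N, pow_mul, hωN, one_pow, mul_one] at this
    exact this
  have hxN : 1 - x ^ N ≠ 0 := sub_ne_zero.mpr fun h => hx h.symm
  -- Step 1: each term equals ω^l * (1-x) / (1 - x ω^l)
  have hterm : ∀ l ∈ Finset.range N,
      ω ^ l * ((∏ j ∈ Finset.Icc 1 l, (1 - (x / ω) * ω ^ j)) /
        (∏ j ∈ Finset.Icc 1 l, (1 - x * ω ^ j)))
      = ω ^ l * ((1 - x) / (1 - x * ω ^ l)) := by
    intro l _
    congr 1
    have hnum : (∏ j ∈ Finset.Icc 1 l, (1 - (x / ω) * ω ^ j))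
        = ∏ i ∈ Finset.range l, (1 - x * ω ^ i) := by
      rw [← Finset.Ico_add_one_right_eq_Icc, Finset.prod_Ico_eq_prod_range]
      apply Finset.prod_congr rfl
      intro i _
      congr 1
      rw [pow_add, pow_one]
      field_simp
    have hden : (∏ j ∈ Finset.Icc 1 l, (1 - x * ω ^ j))
        = ∏ i ∈ Finset.range l, (1 - x * ω ^ (i + 1)) := by
      rw [← Finset.Ico_add_one_right_eq_Icc, Finset.prod_Ico_eq_prod_range]
      apply Finset.prod_congr rfl
      intro i _
      rw [add_comm 1 i]
    rw [hnum, hden]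
    have hdne : (∏ i ∈ Finset.range l, (1 - x * ω ^ (i + 1))) ≠ 0 :=
      Finset.prod_ne_zero_iff.mpr fun i _ => hne (i + 1)
    rw [div_eq_div_iff hdne (hne l)]
    have h1 : (∏ i ∈ Finset.range l, (1 - x * ω ^ i)) * (1 - x * ω ^ l)
        = ∏ i ∈ Finset.range (l + 1), (1 - x * ω ^ i) := (Finset.prod_range_succ _ l).symm
    have h2 : ∏ i ∈ Finset.range (l + 1), (1 - x * ω ^ i)
        = (∏ i ∈ Finset.range l, (1 - x * ω ^ (i + 1))) * (1 - x * ω ^ 0) :=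
      Finset.prod_range_succ' _ l
    rw [h1, h2, pow_zero, mul_one]
    ring
  rw [Finset.sum_congr rfl hterm]
  -- Step 2: key identity  ∑ ω^l/(1-xω^l) = N x^(N-1)/(1-x^N)
  have key : (∑ l ∈ Finset.range N, ω ^ l / (1 - x * ω ^ l))
      = (N : ℂ) * x ^ (N - 1) / (1 - x ^ N) := by
    rw [eq_div_iff hxN]
    have expand : ∀ l ∈ Finset.range N,
        ω ^ l / (1 - x * ω ^ l) * (1 - x ^ N)
        = ∑ k ∈ Finset.range N, x ^ k * (ω ^ (k + 1)) ^ l := by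
      intro l _
      have hgeo : (∑ k ∈ Finset.range N, (x * ω ^ l) ^ k) * (1 - x * ω ^ l)
          = 1 - x ^ N := by
        have := geom_sum_mul (x * ω ^ l) N
        have hpow : (x * ω ^ l) ^ N = x ^ N := by
          rw [mul_pow, ← pow_mul, mul_comm l N, pow_mul, hωN, one_pow, mul_one]
        linear_combination -this - hpow
      have hdiv : (1 - x ^ N) / (1 - x * ω ^ l)
          = ∑ k ∈ Finset.range N, (x * ω ^ l) ^ k := by
        rw [eq_comm, eq_div_iff (hne l)]
        exact hgeo
      have : ω ^ l / (1 - x * ω ^ l) * (1 - x ^ N)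
          = ω ^ l * ∑ k ∈ Finset.range N, (x * ω ^ l) ^ k := by
        rw [← hdiv]
        ring
      rw [this, Finset.mul_sum]
      apply Finset.sum_congr rfl
      intro k _
      rw [mul_pow, ← pow_mul, ← pow_mul]
      have h3 : (k + 1) * l = l + l * k := by ring
      rw [h3, pow_add]
      ring
    rw [Finset.sum_mul, Finset.sum_congr rfl expand, Finset.sum_comm]
    have inner : ∀ k ∈ Finset.range N,
        (∑ l ∈ Finset.range N, x ^ k * (ω ^ (k + 1)) ^ l)
        = if k = N - 1 then (N : ℂ) * x ^ (N - 1) else 0 := by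
      intro k hk
      rw [Finset.mem_range] at hk
      rw [← Finset.mul_sum]
      by_cases hkN : k = N - 1
      · subst hkN
        have : ω ^ (N - 1 + 1) = 1 := by
          rw [Nat.sub_add_cancel (by omega)]; exact hωN
        simp [this, mul_comm]
      · have h1 : 0 < k + 1 := Nat.succ_pos k
        have h2 : k + 1 < N := by omega
        have hne1 : ω ^ (k + 1) ≠ 1 := hprim.pow_ne_one_of_pos_of_lt h1.ne' h2
        rw [if_neg hkN, geom_sum_eq hne1]
        have : (ω ^ (k + 1)) ^ N = 1 := by
          rw [← pow_mul, mul_comm, pow_mul, hωN, one_pow]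
        rw [this]
        simp
    rw [Finset.sum_congr rfl inner, Finset.sum_ite_eq' (Finset.range N) (N - 1)]
    rw [if_pos (Finset.mem_range.mpr (by omega))]
  -- assemble
  have : (∑ l ∈ Finset.range N, ω ^ l * ((1 - x) / (1 - x * ω ^ l)))
      = (1 - x) * ∑ l ∈ Finset.range N, ω ^ l / (1 - x * ω ^ l) := by
    rw [Finset.mul_sum]
    apply Finset.sum_congr rfl
    intro l _
    field_simp
  rw [this, key]
  field_simp
end

section
/- For x ∈ ℂ, x^N ≠ 1: ∑_{l=0}^{N-1} ω^l/(1 - x ω^l) = N x^{N-1}/(1 - x^N), where ω = exp(2πi/N). -/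
open Complex

lemma aux_prod_one_sub (n : ℕ) (hn : 0 < n) (ζ : ℂ) (hζ : IsPrimitiveRoot ζ n) (y : ℂ) :
    ∏ i ∈ Finset.range n, (1 - y * ζ ^ i) = 1 - y ^ n := by
  have hpoly := X_pow_sub_C_eq_prod hζ hn (one_pow n)
  have hz : ∀ z : ℂ, z ^ n - 1 = ∏ i ∈ Finset.range n, (z - ζ ^ i) := by
    intro z
    have := congrArg (Polynomial.eval z) hpoly
    simpa [Polynomial.eval_prod] using this
  rcases eq_or_ne y 0 with rfl | hy
  · simp [Finset.prod_ite_eq, hn.ne']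
  · have h1 := hz y⁻¹
    have : ∏ i ∈ Finset.range n, (1 - y * ζ ^ i) =
        ∏ i ∈ Finset.range n, (y * (y⁻¹ - ζ ^ i)) := by
      apply Finset.prod_congr rfl
      intro i _
      field_simp
    rw [this, Finset.prod_mul_distrib, Finset.prod_const, Finset.card_range, ← h1]
    field_simp
    rw [div_pow, one_pow, mul_sub, mul_one_div_cancel (pow_ne_zero n hy), mul_one]

theorem stmt8 (N : ℕ) (hN : 1 ≤ N) (x : ℂ) (hx : x ^ N ≠ 1) :
    (∑ l ∈ Finset.range N,
        Complex.exp (2 * Real.pi * Complex.I / N) ^ l /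
          (1 - x * Complex.exp (2 * Real.pi * Complex.I / N) ^ l)) =
      (N : ℂ) * x ^ (N - 1) / (1 - x ^ N) := by
  set ζ := Complex.exp (2 * Real.pi * Complex.I / N) with hζdef
  have hN0 : (N : ℕ) ≠ 0 := by omega
  have hζ : IsPrimitiveRoot ζ N := Complex.isPrimitiveRoot_exp N hN0
  have hprod : ∀ y : ℂ, ∏ i ∈ Finset.range N, (1 - y * ζ ^ i) = 1 - y ^ N :=
    aux_prod_one_sub N (by omega) ζ hζ
  have hden : (1 : ℂ) - x ^ N ≠ 0 := sub_ne_zero.mpr (Ne.symm hx)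
  have hfac : ∀ i ∈ Finset.range N, (1 : ℂ) - x * ζ ^ i ≠ 0 := by
    intro i hi hzero
    apply hden
    rw [← hprod x]
    exact Finset.prod_eq_zero hi hzero
  -- derivative of the product
  have hd1 : HasDerivAt (fun y : ℂ => ∏ i ∈ Finset.range N, (1 - y * ζ ^ i))
      (∑ i ∈ Finset.range N,
        (∏ j ∈ (Finset.range N).erase i, (1 - x * ζ ^ j)) • (-ζ ^ i)) x := by
    apply HasDerivAt.fun_finsetProd
    intro i _
    simpa using ((hasDerivAt_id x).mul_const (ζ ^ i)).const_sub 1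
  have hd2 : HasDerivAt (fun y : ℂ => ∏ i ∈ Finset.range N, (1 - y * ζ ^ i))
      (-((N : ℂ) * x ^ (N - 1))) x := by
    have : (fun y : ℂ => ∏ i ∈ Finset.range N, (1 - y * ζ ^ i)) =
        fun y : ℂ => 1 - y ^ N := funext hprod
    rw [this]
    simpa using (hasDerivAt_pow N x).const_sub 1
  have hkey : ∑ i ∈ Finset.range N,
      (∏ j ∈ (Finset.range N).erase i, (1 - x * ζ ^ j)) * (ζ ^ i) =
      (N : ℂ) * x ^ (N - 1) := by
    have := hd1.unique hd2
    have h2 : -∑ i ∈ Finset.range N,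
        (∏ j ∈ (Finset.range N).erase i, (1 - x * ζ ^ j)) * (ζ ^ i) =
        -((N : ℂ) * x ^ (N - 1)) := by
      rw [← this, ← Finset.sum_neg_distrib]
      apply Finset.sum_congr rfl
      intro i _
      simp only [smul_eq_mul, neg_mul, mul_neg]
    linear_combination -h2
  rw [← hkey, Finset.sum_div]
  apply Finset.sum_congr rfl
  intro l hl
  have hprodl : (∏ j ∈ (Finset.range N).erase l, (1 - x * ζ ^ j)) * (1 - x * ζ ^ l) =
      1 - x ^ N := by
    rw [Finset.prod_erase_mul _ _ hl]
    exact hprod x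
  rw [div_eq_div_iff (hfac l hl) hden]
  calc ζ ^ l * (1 - x ^ N) = ζ ^ l * ((∏ j ∈ (Finset.range N).erase l, (1 - x * ζ ^ j)) *
      (1 - x * ζ ^ l)) := by rw [hprodl]
    _ = (∏ j ∈ (Finset.range N).erase l, (1 - x * ζ ^ j)) * ζ ^ l * (1 - x * ζ ^ l) := by ring
end

section
/- Let ρ, μ be standard representations of W_N given by ρ(E)=a_ρ²Z, ρ(D)=a_ρ y_ρ X and similarly for μ, and let ρ⊗μ be defined via the comultiplication Δ(E)=E⊗E, Δ(D)=E⊗D+D⊗1. Then (ρ⊗μ)(E^N) = (a_ρ a_μ)^{2N}·Id and (ρ⊗μ)(D^N) = (a_ρ a_μ)^N (a_ρ^N y_μ^N + y_ρ^N/a_μ^N)·Id on ℂ^N ⊗ ℂ^N. -/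
open Complex Matrix Kronecker

/-- The diagonal matrix `Z` with `Z_{ii} = ω^i`. -/
noncomputable def Zmat (N : ℕ) : Matrix (Fin N) (Fin N) ℂ :=
  Matrix.diagonal fun i => Complex.exp (2 * Real.pi * Complex.I / N) ^ (i : ℕ)

/-- The cyclic shift matrix `X` with `X_{ij} = δ_{i, j+1 mod N}`. -/
def Xmat (N : ℕ) : Matrix (Fin N) (Fin N) ℂ :=
  Matrix.of fun i j => if (i : ℕ) = ((j : ℕ) + 1) % N then 1 else 0

section Abstract
variable {R : Type*} [Ring R] [Algebra ℂ R]

lemma swapL (ω : ℂ) (u v : R) (h : v * u = ω • (u * v)) :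
    ∀ n : ℕ, v * u ^ n = ω ^ n • (u ^ n * v) := by
  intro n
  induction n with
  | zero => simp
  | succ n ih =>
      rw [pow_succ, ← mul_assoc, ih, smul_mul_assoc, mul_assoc, h, mul_smul_comm,
        smul_smul, pow_succ]
      rw [mul_assoc]

lemma swapR (ω : ℂ) (u v : R) (h : v * u = ω • (u * v)) :
    ∀ n : ℕ, v ^ n * u = ω ^ n • (u * v ^ n) := by
  intro n
  induction n with
  | zero => simp
  | succ n ih =>
      rw [pow_succ', mul_assoc, ih, mul_smul_comm, ← mul_assoc, h, smul_mul_assoc,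
        smul_smul, ← pow_succ, mul_assoc, ← pow_succ']

lemma uv_pow (ω : ℂ) (u v : R) (h : v * u = ω • (u * v)) :
    ∀ n : ℕ, (u * v) ^ n = ω ^ (n.choose 2) • (u ^ n * v ^ n) := by
  intro n
  induction n with
  | zero => simp
  | succ n ih =>
      rw [pow_succ', ih, mul_smul_comm, ← mul_assoc, mul_assoc u v (u^n), swapL ω u v h n]
      simp only [mul_smul_comm, smul_mul_assoc, smul_smul]
      rw [show ω ^ n.choose 2 * ω ^ n = ω ^ (n+1).choose 2 by
        rw [← pow_add, Nat.choose_succ_succ, Nat.choose_one_right, Nat.add_comm]]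
      congr 1
      rw [← mul_assoc, ← pow_succ', mul_assoc, ← pow_succ']

lemma finset_to_list_prod {M : Type*} [CommMonoid M] (f : ℕ → M) (n : ℕ) :
    (∏ k ∈ Finset.range n, f k) = ((List.range n).map f).prod := by
  induction n with
  | zero => simp
  | succ n ih =>
      rw [Finset.prod_range_succ, List.range_succ, List.map_append, List.prod_append, ih]
      simp

open Polynomial in
lemma list_prod_roots {ζ : ℂ} {N : ℕ} (hN : 0 < N) (hodd : Odd N)
    (hζ : IsPrimitiveRoot ζ N) (d : R) :
    ((List.range N).map (fun k => d + ζ ^ k • (1 : R))).prod = d ^ N + 1 := by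
  have hpoly : ((X : ℂ[X]) ^ N - C ((-1 : ℂ) ^ N)) =
      ∏ i ∈ Finset.range N, (X - C (ζ ^ i * (-1))) := X_pow_sub_C_eq_prod hζ hN rfl
  have hpoly2 : ((X : ℂ[X]) ^ N + 1) = ∏ i ∈ Finset.range N, (X + C (ζ ^ i)) := by
    rw [hodd.neg_one_pow] at hpoly
    simpa [sub_neg_eq_add, mul_neg_one, map_neg] using hpoly
  have := congrArg (Polynomial.aeval d) (hpoly2.trans (finset_to_list_prod _ N))
  rw [map_add, map_pow, aeval_X, _root_.map_one, map_list_prod] at this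
  simp only [List.map_map, Function.comp_def, map_add, aeval_X, aeval_C,
    Algebra.algebraMap_eq_smul_one] at this
  exact this.symm

lemma list_smul_prod (n : ℕ) (c : ℕ → ℂ) (M : ℕ → R) :
    ((List.range n).map (fun k => c k • M k)).prod =
      (∏ k ∈ Finset.range n, c k) • ((List.range n).map M).prod := by
  induction n with
  | zero => simp
  | succ n ih =>
      rw [List.range_succ, List.map_append, List.prod_append, ih, List.map_append,
        List.prod_append, Finset.prod_range_succ]
      simp [smul_mul_assoc, mul_smul_comm, smul_smul, mul_comm]

lemma sum_range_eq_choose (n : ℕ) : (∑ k ∈ Finset.range n, k) = n.choose 2 := by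
  have h2 := Finset.sum_range_id_mul_two n
  rw [Nat.choose_two_right, ← h2, Nat.mul_div_cancel _ (by norm_num)]

lemma pow_choose_two {c : ℂ} {N : ℕ} (hc : c ^ N = 1) (hodd : Odd N) :
    c ^ (N.choose 2) = 1 := by
  obtain ⟨m, hm⟩ := hodd
  subst hm
  have h : (2 * m + 1).choose 2 = (2 * m + 1) * m := by
    rw [Nat.choose_two_right, Nat.add_sub_cancel,
      show (2 * m + 1) * (2 * m) = ((2 * m + 1) * m) * 2 by ring]
    exact Nat.mul_div_cancel _ (by norm_num)
  rw [h, pow_mul, hc, one_pow]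

/-- The key product identity: `∏_{k<N} (1 + ζ^k • d) = 1 + d^N` for `ζ` a primitive
`N`-th root of unity and `N` odd. -/
lemma prod_one_add {ζ : ℂ} {N : ℕ} (hN : 0 < N) (hodd : Odd N)
    (hζ : IsPrimitiveRoot ζ N) (d : R) :
    ((List.range N).map (fun k => (1 : R) + ζ ^ k • d)).prod = 1 + d ^ N := by
  set ξ : ℂ := ζ ^ (N - 1) with hξ
  have hζN : ζ ^ N = 1 := hζ.pow_eq_one
  have hmul : ζ * ξ = 1 := by
    rw [hξ, ← pow_succ', Nat.sub_add_cancel hN, hζN]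
  have hterm : ∀ k : ℕ, (1 : R) + ζ ^ k • d = ζ ^ k • (d + ξ ^ k • (1 : R)) := by
    intro k
    rw [smul_add, smul_smul, ← mul_pow, hmul, one_pow, one_smul, add_comm]
  have hξprim : IsPrimitiveRoot ξ N := by
    rw [hξ]
    exact hζ.pow_of_coprime (N - 1)
      ((Nat.coprime_self_sub_left hN).mpr (Nat.coprime_one_left N))
  calc ((List.range N).map (fun k => (1 : R) + ζ ^ k • d)).prod
      = ((List.range N).map (fun k => ζ ^ k • (d + ξ ^ k • (1 : R)))).prod := by
        simp only [hterm]
    _ = (∏ k ∈ Finset.range N, ζ ^ k) •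
          ((List.range N).map (fun k => d + ξ ^ k • (1 : R))).prod :=
        list_smul_prod N _ _
    _ = 1 + d ^ N := by
        rw [list_prod_roots hN hodd hξprim d, Finset.prod_pow_eq_pow_sum,
          sum_range_eq_choose, pow_choose_two hζN hodd]
        simp [add_comm]

lemma move_single (ω : ℂ) (a d : R) (h : a * d = ω • (d * a)) (k : ℕ) :
    a * (1 + ω ^ k • d) = (1 + ω ^ (k + 1) • d) * a := by
  rw [mul_add, add_mul, mul_one, one_mul, mul_smul_comm, h, smul_smul, smul_mul_assoc,
    ← pow_succ]

lemma move_prod (ω : ℂ) (a d : R) (h : a * d = ω • (d * a)) (n : ℕ) :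
    a * ((List.range n).map (fun k => 1 + ω ^ k • d)).prod =
      ((List.range n).map (fun k => 1 + ω ^ (k + 1) • d)).prod * a := by
  induction n with
  | zero => simp
  | succ n ih =>
      rw [List.range_succ, List.map_append, List.map_append, List.prod_append,
        List.prod_append, ← mul_assoc, ih, mul_assoc, mul_assoc]
      congr 1
      simp only [List.map_cons, List.map_nil, List.prod_cons, List.prod_nil, mul_one]
      exact move_single ω a d h n

/-- The "quantum binomial" trick: if `a * d = ω • (d * a)` then
`(a + d*a)^n = ∏_{k<n}(1 + ω^k d) * a^n`. -/
lemma add_pow_eq (ω : ℂ) (a d : R) (h : a * d = ω • (d * a)) (n : ℕ) :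
    (a + d * a) ^ n = ((List.range n).map (fun k => 1 + ω ^ k • d)).prod * a ^ n := by
  induction n with
  | zero => simp
  | succ n ih =>
      have hfac : a + d * a = (1 + d) * a := by rw [add_mul, one_mul]
      rw [pow_succ', ih, hfac, mul_assoc (1 + d) a _, ← mul_assoc a _ (a ^ n),
        move_prod ω a d h n, mul_assoc, ← pow_succ', ← mul_assoc]
      congr 1
      rw [List.range_succ_eq_map, List.map_cons, List.prod_cons, List.map_map]
      simp [Function.comp_def]

end Abstract

section Mat
variable {N : ℕ}

local notation "ω" => Complex.exp (2 * Real.pi * Complex.I / N)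

lemma hω (hN : 0 < N) : ω ^ N = 1 :=
  (Complex.isPrimitiveRoot_exp N hN.ne').pow_eq_one

lemma ωmod (hN : 0 < N) (a : ℕ) : ω ^ (a % N) = ω ^ a := by
  conv_rhs => rw [← Nat.div_add_mod a N]
  rw [pow_add, pow_mul, hω hN, one_pow, one_mul]

lemma Xpow (hN : 0 < N) (n : ℕ) :
    (Xmat N) ^ n = Matrix.of fun i j : Fin N => if (i : ℕ) = ((j : ℕ) + n) % N then 1 else 0 := by
  induction n with
  | zero =>
      ext i j
      simp [Matrix.one_apply, Fin.ext_iff, Nat.mod_eq_of_lt j.isLt, eq_comm]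
  | succ n ih =>
      rw [pow_succ, ih]
      ext i j
      rw [Matrix.mul_apply]
      simp only [Matrix.of_apply, Xmat]
      rw [Finset.sum_eq_single (⟨((j : ℕ) + 1) % N, Nat.mod_lt _ hN⟩ : Fin N)]
      · simp only [if_true, mul_one, Nat.mod_add_mod]
        rw [show ((j : ℕ) + 1 + n) = (j : ℕ) + (n + 1) by omega]
      · intro b _ hb
        have hne : (b : ℕ) ≠ ((j : ℕ) + 1) % N := fun hcon => hb (Fin.ext hcon)
        simp [hne]
      · intro hmem
        exact absurd (Finset.mem_univ _) hmem

lemma XpowN (hN : 0 < N) : (Xmat N) ^ N = 1 := by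
  rw [Xpow hN]
  ext i j
  simp [Matrix.one_apply, Fin.ext_iff, Nat.add_mod_right, Nat.mod_eq_of_lt j.isLt, eq_comm]

lemma ZpowN (hN : 0 < N) : (Zmat N) ^ N = 1 := by
  rw [Zmat, Matrix.diagonal_pow]
  have h : ((fun i : Fin N => ω ^ (i : ℕ)) ^ N) = fun _ => 1 := by
    funext i
    simp only [Pi.pow_apply]
    rw [← pow_mul, mul_comm (i : ℕ) N, pow_mul, hω hN, one_pow]
  rw [h, Matrix.diagonal_one]

lemma ZXrel (hN : 0 < N) : Zmat N * Xmat N = ω • (Xmat N * Zmat N) := by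
  ext i j
  rw [Zmat, Matrix.smul_apply, Matrix.diagonal_mul, Matrix.mul_diagonal]
  simp only [Xmat, Matrix.of_apply]
  by_cases h : (i : ℕ) = ((j : ℕ) + 1) % N
  · rw [if_pos h, mul_one, one_mul, h, ωmod hN, pow_succ, smul_eq_mul, mul_comm]
  · rw [if_neg h, mul_zero, zero_mul, smul_zero]

lemma kron_pow (A B : Matrix (Fin N) (Fin N) ℂ) (n : ℕ) :
    (A ⊗ₖ B) ^ n = (A ^ n) ⊗ₖ (B ^ n) := by
  induction n with
  | zero => simp [Matrix.one_kronecker_one]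
  | succ n ih => rw [pow_succ, ih, ← Matrix.mul_kronecker_mul, ← pow_succ, ← pow_succ]

end Mat

/-- For standard representations `ρ(E) = aρ²Z, ρ(D) = aρ yρ X` (and similarly for `μ`),
the tensor product via `Δ(E) = E⊗E`, `Δ(D) = E⊗D + D⊗1` satisfies
`(ρ⊗μ)(E^N) = (aρaμ)^{2N}·Id` and
`(ρ⊗μ)(D^N) = (aρaμ)^N (aρ^N yμ^N + yρ^N/aμ^N)·Id`. -/
theorem stmt17 (N : ℕ) (hN : 3 ≤ N) (hodd : Odd N)
    (aρ yρ aμ yμ : ℂ) (haρ : aρ ≠ 0) (hyρ : yρ ≠ 0) (haμ : aμ ≠ 0) (hyμ : yμ ≠ 0) :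
    ((aρ ^ 2 • Zmat N) ⊗ₖ (aμ ^ 2 • Zmat N)) ^ N = ((aρ * aμ) ^ (2 * N)) • 1 ∧
    ((aρ ^ 2 • Zmat N) ⊗ₖ ((aμ * yμ) • Xmat N) +
        ((aρ * yρ) • Xmat N) ⊗ₖ (1 : Matrix (Fin N) (Fin N) ℂ)) ^ N =
      ((aρ * aμ) ^ N * (aρ ^ N * yμ ^ N + yρ ^ N / aμ ^ N)) • 1 := by
  have hN0 : 0 < N := by omega
  set ω := Complex.exp (2 * Real.pi * Complex.I / N) with hωdef
  have hprim : IsPrimitiveRoot ω N := Complex.isPrimitiveRoot_exp N hN0.ne'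
  have hωN : ω ^ N = 1 := hprim.pow_eq_one
  have hXN : (Xmat N) ^ N = 1 := XpowN hN0
  have hZN : (Zmat N) ^ N = 1 := ZpowN hN0
  have hZX : Zmat N * Xmat N = ω • (Xmat N * Zmat N) := ZXrel hN0
  constructor
  · rw [Matrix.smul_kronecker, Matrix.kronecker_smul, smul_smul, smul_pow,
      kron_pow, hZN, Matrix.one_kronecker_one]
    congr 1
    ring
  · -- abbreviations
    set α : ℂ := aρ ^ 2 * (aμ * yμ) with hα
    set γ : ℂ := yρ / (aρ * (aμ * yμ)) with hγ
    set a : Matrix (Fin N × Fin N) (Fin N × Fin N) ℂ := α • ((Zmat N) ⊗ₖ (Xmat N)) with ha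
    set d : Matrix (Fin N × Fin N) (Fin N × Fin N) ℂ :=
      γ • ((Xmat N * (Zmat N) ^ (N - 1)) ⊗ₖ ((Xmat N) ^ (N - 1))) with hd
    have hZsplit : (Zmat N) ^ (N - 1) * Zmat N = 1 := by
      rw [← pow_succ, Nat.sub_add_cancel (show 1 ≤ N by omega), hZN]
    have hXsplit : (Xmat N) ^ (N - 1) * Xmat N = 1 := by
      rw [← pow_succ, Nat.sub_add_cancel (show 1 ≤ N by omega), hXN]
    have hA : (aρ ^ 2 • Zmat N) ⊗ₖ ((aμ * yμ) • Xmat N) = a := by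
      rw [ha, Matrix.smul_kronecker, Matrix.kronecker_smul, smul_smul]
    have hda : d * a = ((aρ * yρ) • Xmat N) ⊗ₖ (1 : Matrix (Fin N) (Fin N) ℂ) := by
      rw [hd, ha, smul_mul_assoc, mul_smul_comm, smul_smul, ← Matrix.mul_kronecker_mul,
        mul_assoc, hZsplit, mul_one, hXsplit, Matrix.smul_kronecker]
      congr 1
      rw [hγ, hα]
      field_simp
    have hZsplit' : Zmat N * (Zmat N) ^ (N - 1) = 1 := by
      rw [← pow_succ', Nat.sub_add_cancel (show 1 ≤ N by omega), hZN]
    have hXsplit' : Xmat N * (Xmat N) ^ (N - 1) = 1 := by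
      rw [← pow_succ', Nat.sub_add_cancel (show 1 ≤ N by omega), hXN]
    have hcomm : a * d = ω • (d * a) := by
      have e1 : Zmat N * (Xmat N * (Zmat N) ^ (N - 1)) = ω • Xmat N := by
        rw [← mul_assoc, hZX, smul_mul_assoc, mul_assoc, hZsplit', mul_one]
      rw [hda, ha, hd, smul_mul_assoc, mul_smul_comm, smul_smul, ← Matrix.mul_kronecker_mul,
        e1, hXsplit', Matrix.smul_kronecker, Matrix.smul_kronecker, smul_smul, smul_smul]
      congr 1
      rw [hα, hγ]
      field_simp
    have ha_pow : a ^ N = α ^ N • 1 := by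
      rw [ha, smul_pow, kron_pow, hZN, hXN, Matrix.one_kronecker_one]
    have hd_pow : d ^ N = γ ^ N • 1 := by
      have hsw : (Zmat N) ^ (N - 1) * Xmat N =
          (ω ^ (N - 1)) • (Xmat N * (Zmat N) ^ (N - 1)) := swapR ω _ _ hZX (N - 1)
      have hZ2 : ((Zmat N) ^ (N - 1)) ^ N = 1 := by
        rw [← pow_mul, mul_comm (N - 1) N, pow_mul, hZN, one_pow]
      have hωc : (ω ^ (N - 1)) ^ N.choose 2 = 1 :=
        pow_choose_two (by rw [← pow_mul, mul_comm (N - 1) N, pow_mul, hωN, one_pow]) hodd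
      have hE : (Xmat N * (Zmat N) ^ (N - 1)) ^ N = 1 := by
        rw [uv_pow (ω ^ (N - 1)) (Xmat N) ((Zmat N) ^ (N - 1)) hsw N, hXN, hZ2, mul_one,
          hωc, one_smul]
      have hX2 : ((Xmat N) ^ (N - 1)) ^ N = 1 := by
        rw [← pow_mul, mul_comm (N - 1) N, pow_mul, hXN, one_pow]
      rw [hd, smul_pow, kron_pow, hE, hX2, Matrix.one_kronecker_one]
    rw [hA, ← hda, add_pow_eq ω a d hcomm N, prod_one_add hN0 hodd hprim d, hd_pow, ha_pow,
      show (1 : Matrix (Fin N × Fin N) (Fin N × Fin N) ℂ) + γ ^ N • 1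
          = (1 + γ ^ N) • (1 : Matrix (Fin N × Fin N) (Fin N × Fin N) ℂ) by
        rw [add_smul, one_smul],
      smul_mul_smul_comm, mul_one]
    congr 1
    rw [hα, hγ]
    field_simp
    have h1 : aρ ^ N * aρ⁻¹ ^ N = 1 := by rw [← mul_pow, mul_inv_cancel₀ haρ, one_pow]
    have h2 : aμ ^ N * aμ⁻¹ ^ N = 1 := by rw [← mul_pow, mul_inv_cancel₀ haμ, one_pow]
    have h3 : yμ ^ N * yμ⁻¹ ^ N = 1 := by rw [← mul_pow, mul_inv_cancel₀ hyμ, one_pow]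
    linear_combination yρ ^ N * aρ ^ N * aμ ^ N *
      (aμ ^ N * aμ⁻¹ ^ N * yμ ^ N * yμ⁻¹ ^ N * h1 + yμ ^ N * yμ⁻¹ ^ N * h2 + h3)
end
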